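/- Let X and Y be Banach spaces and T ∈ L(X,Y). Suppose T is an absolutely strongly exposing operator, absolutely strongly exposing B_X at x₀ with ‖T x₀‖ = ‖T‖, and let y* ∈ Y* with ‖y*‖ = 1 satisfy Re y*(T x₀) = ‖T‖. Then T* y* strongly exposes the unit ball B_X at x₀. -/

import Mathlib

open Filter Topology RCLike Bornology

/-- `f` strongly exposes the bounded set `C` at `x₀`. -/
def StronglyExposes {𝕜 X : Type} [RCLike 𝕜] [NormedAddCommGroup X] [NormedSpace 𝕜 X]
    (f : X →L[𝕜] 𝕜) (C : Set X) (x₀ : X) : Prop :=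
  x₀ ∈ C ∧ (∀ x ∈ C, re (f x) ≤ re (f x₀)) ∧
    ∀ u : ℕ → X, (∀ n, u n ∈ C) →
      Tendsto (fun n => re (f (u n))) atTop (𝓝 (re (f x₀))) →
      Tendsto u atTop (𝓝 x₀)

/-- `f` strongly exposes the closed unit ball at `x₀`. -/
def StronglyExposesBall {𝕜 X : Type} [RCLike 𝕜] [NormedAddCommGroup X] [NormedSpace 𝕜 X]
    (f : X →L[𝕜] 𝕜) (x₀ : X) : Prop :=
  ‖x₀‖ ≤ 1 ∧ re (f x₀) = ‖f‖ ∧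
    ∀ u : ℕ → X, (∀ n, ‖u n‖ ≤ 1) →
      Tendsto (fun n => re (f (u n))) atTop (𝓝 ‖f‖) →
      Tendsto u atTop (𝓝 x₀)

/-- `T` absolutely strongly exposes the closed unit ball at `x₀`. -/
def AbsStronglyExposes {𝕜 X Y : Type} [RCLike 𝕜] [NormedAddCommGroup X] [NormedSpace 𝕜 X]
    [NormedAddCommGroup Y] [NormedSpace 𝕜 Y] (T : X →L[𝕜] Y) (x₀ : X) : Prop :=
  ‖x₀‖ ≤ 1 ∧
    ∀ u : ℕ → X, (∀ n, ‖u n‖ ≤ 1) →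
      Tendsto (fun n => ‖T (u n)‖) atTop (𝓝 ‖T‖) →
      ∃ θ : ℕ → 𝕜, (∀ n, ‖θ n‖ = 1) ∧ Tendsto (fun n => θ n • u n) atTop (𝓝 x₀)

/-- If `‖a n‖ ≤ M` and `re (a n) → M` then `a n → M`. -/
lemma aux_tendsto_of_re {𝕜 : Type} [RCLike 𝕜] {a : ℕ → 𝕜} {M : ℝ}
    (hle : ∀ n, ‖a n‖ ≤ M)
    (hre : Tendsto (fun n => re (a n)) atTop (𝓝 M)) :
    Tendsto a atTop (𝓝 (M : 𝕜)) := by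
  have key : Tendsto (fun n => ‖a n - (M : 𝕜)‖ ^ 2) atTop (𝓝 0) := by
    have hub : ∀ n, ‖a n - (M : 𝕜)‖ ^ 2 ≤ 2 * M ^ 2 - 2 * M * re (a n) := by
      intro n
      have h1 : ‖a n - (M : 𝕜)‖ ^ 2 =
          re (a n - (M : 𝕜)) * re (a n - (M : 𝕜)) + im (a n - (M : 𝕜)) * im (a n - (M : 𝕜)) :=
        RCLike.norm_sq_eq_def
      have h2 : ‖a n‖ ^ 2 = re (a n) * re (a n) + im (a n) * im (a n) :=
        RCLike.norm_sq_eq_def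
      have h3 : ‖a n‖ ^ 2 ≤ M ^ 2 := by
        have := hle n; nlinarith [norm_nonneg (a n)]
      simp only [map_sub, RCLike.ofReal_re, RCLike.ofReal_im, sub_zero] at h1
      nlinarith
    have hub' : Tendsto (fun n => 2 * M ^ 2 - 2 * M * re (a n)) atTop (𝓝 0) := by
      have h := (hre.const_mul (2 * M)).const_sub (2 * M ^ 2)
      have : (2 : ℝ) * M ^ 2 - 2 * M * M = 0 := by ring
      rw [this] at h
      exact h.congr fun n => by ring
    have h0 : Tendsto (fun _ : ℕ => (0 : ℝ)) atTop (𝓝 0) := tendsto_const_nhds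
    exact tendsto_of_tendsto_of_tendsto_of_le_of_le h0 hub'
      (fun n => sq_nonneg _) hub
  have key2 : Tendsto (fun n => ‖a n - (M : 𝕜)‖) atTop (𝓝 0) := by
    have := key.sqrt
    simpa [Real.sqrt_sq (norm_nonneg _)] using this
  exact tendsto_iff_norm_sub_tendsto_zero.mpr key2

theorem stmt3 {𝕜 X Y : Type} [RCLike 𝕜]
    [NormedAddCommGroup X] [NormedSpace 𝕜 X] [CompleteSpace X]
    [NormedAddCommGroup Y] [NormedSpace 𝕜 Y] [CompleteSpace Y]
    (T : X →L[𝕜] Y) (x₀ : X) (hT : AbsStronglyExposes T x₀) (hmax : ‖T x₀‖ = ‖T‖)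
    (g : Y →L[𝕜] 𝕜) (hg : ‖g‖ = 1) (hre : re (g (T x₀)) = ‖T‖) :
    StronglyExposesBall (g.comp T) x₀ := by
  set f := g.comp T with hf
  have hx₀ : ‖x₀‖ ≤ 1 := hT.1
  have hfle : ‖f‖ ≤ ‖T‖ := by
    have := ContinuousLinearMap.opNorm_comp_le g T
    simpa [hg] using this
  have hfx : f x₀ = g (T x₀) := rfl
  have hTf : ‖T‖ ≤ ‖f‖ := by
    calc ‖T‖ = re (f x₀) := by rw [hfx, hre]
    _ ≤ ‖f x₀‖ := RCLike.re_le_norm _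
    _ ≤ ‖f‖ * ‖x₀‖ := f.le_opNorm x₀
    _ ≤ ‖f‖ := mul_le_of_le_one_right (norm_nonneg f) hx₀
  have hfeq : ‖f‖ = ‖T‖ := le_antisymm hfle hTf
  refine ⟨hx₀, by rw [hfeq, hfx, hre], ?_⟩
  intro u hu hconv
  rw [hfeq] at hconv
  have hfub : ∀ x : X, ‖x‖ ≤ 1 → ‖f x‖ ≤ ‖T‖ := fun x hx => by
    calc ‖f x‖ ≤ ‖f‖ * ‖x‖ := f.le_opNorm x
    _ ≤ ‖T‖ * 1 := mul_le_mul hfle hx (norm_nonneg x) (norm_nonneg T)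
    _ = ‖T‖ := mul_one _
  by_cases hT0 : ‖T‖ = 0
  · -- degenerate case: T = 0
    have hTz : T = 0 := by rwa [← norm_eq_zero]
    obtain ⟨θ₀, hθ₀, h0⟩ := hT.2 (fun _ => 0) (by simp) (by simp [hTz, hT0])
    have hx0 : x₀ = 0 := by
      have h0' : Tendsto (fun _ : ℕ => (0 : X)) atTop (𝓝 x₀) := by simpa using h0
      exact tendsto_nhds_unique h0' tendsto_const_nhds
    obtain ⟨θ, hθ, hθu⟩ := hT.2 u hu (by simp [hTz, hT0])
    rw [hx0] at hθu ⊢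
    have : Tendsto (fun n => ‖θ n • u n‖) atTop (𝓝 0) := by
      simpa using hθu.norm
    have hn : Tendsto (fun n => ‖u n‖) atTop (𝓝 0) := by
      refine this.congr fun n => ?_
      rw [norm_smul, hθ n, one_mul]
    exact tendsto_zero_iff_norm_tendsto_zero.mpr hn
  · have hM : 0 < ‖T‖ := lt_of_le_of_ne (norm_nonneg T) (Ne.symm hT0)
    have hMne : ((‖T‖ : ℝ) : 𝕜) ≠ 0 := by
      simpa using hT0
    -- squeeze to get ‖T u n‖ → ‖T‖
    have hTu : Tendsto (fun n => ‖T (u n)‖) atTop (𝓝 ‖T‖) := by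
      refine tendsto_of_tendsto_of_tendsto_of_le_of_le hconv tendsto_const_nhds
        (fun n => ?_) (fun n => ?_)
      · calc re (f (u n)) ≤ ‖f (u n)‖ := RCLike.re_le_norm _
        _ = ‖g (T (u n))‖ := rfl
        _ ≤ ‖g‖ * ‖T (u n)‖ := g.le_opNorm _
        _ = ‖T (u n)‖ := by rw [hg, one_mul]
      · calc ‖T (u n)‖ ≤ ‖T‖ * ‖u n‖ := T.le_opNorm _
        _ ≤ ‖T‖ * 1 := by gcongr; exact hu n
        _ = ‖T‖ := mul_one _
    obtain ⟨θ, hθ1, hθu⟩ := hT.2 u hu hTu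
    -- f (u n) → ‖T‖
    have ha : Tendsto (fun n => f (u n)) atTop (𝓝 ((‖T‖ : ℝ) : 𝕜)) :=
      aux_tendsto_of_re (fun n => hfub (u n) (hu n)) hconv
    -- f x₀ = ‖T‖
    have hfx0 : f x₀ = ((‖T‖ : ℝ) : 𝕜) := by
      have hc : Tendsto (fun _ : ℕ => f x₀) atTop (𝓝 ((‖T‖ : ℝ) : 𝕜)) :=
        aux_tendsto_of_re (fun _ => hfub x₀ hx₀)
          (by rw [hfx, hre]; exact tendsto_const_nhds)
      exact tendsto_nhds_unique tendsto_const_nhds hc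
    -- θ n * f (u n) → ‖T‖
    have hθa : Tendsto (fun n => θ n * f (u n)) atTop (𝓝 ((‖T‖ : ℝ) : 𝕜)) := by
      have := (f.continuous.tendsto x₀).comp hθu
      rw [hfx0] at this
      refine this.congr fun n => ?_
      simp [Function.comp, map_smul, smul_eq_mul]
    -- θ n → 1
    have hθlim : Tendsto θ atTop (𝓝 (1 : 𝕜)) := by
      have hdiv : Tendsto (fun n => θ n * f (u n) / f (u n)) atTop (𝓝 (1 : 𝕜)) := by
        have := hθa.div ha hMne
        rwa [div_self hMne] at this
      have hev : ∀ᶠ n in atTop, θ n * f (u n) / f (u n) = θ n := by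
        filter_upwards [ha.eventually_ne hMne] with n hn
        field_simp
      exact hdiv.congr' hev
    -- conclude
    have hstar : Tendsto (fun n => (starRingEnd 𝕜) (θ n)) atTop (𝓝 (1 : 𝕜)) := by
      have := ((RCLike.continuous_conj (K := 𝕜)).tendsto 1).comp hθlim
      simpa [Function.comp_def] using this
    have hfinal : Tendsto (fun n => (starRingEnd 𝕜) (θ n) • (θ n • u n)) atTop
        (𝓝 ((1 : 𝕜) • x₀)) := hstar.smul hθu
    rw [one_smul] at hfinal
    refine hfinal.congr fun n => ?_
    rw [smul_smul, RCLike.conj_mul, hθ1 n]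
    norm_num
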